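/- Let d ≥ 1, k ≥ 2, n = dk³, Y = {0, 1, k, 2k, ..., dk, dk²}. Then every integer m with 0 ≤ m ≤ n − 1 is a sum of at most 3k − 2 elements of Y. -/

import Mathlib

open Filter Set Pointwise

/-- `nfold A h` is the `h`-fold sumset of `A` (sums of exactly `h` elements). -/
def nfold (A : Set ℤ) : ℕ → Set ℤ
  | 0 => {0}
  | n + 1 => A + nfold A n

/-- The `h`-fold sumset of `A` contains all sufficiently large naturals. -/
def CoversAt (A : Set ℤ) (h : ℕ) : Prop :=
  ∀ᶠ m : ℕ in Filter.atTop, (m : ℤ) ∈ nfold A h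

/-- `A` is an asymptotic basis for ℕ. -/
def IsAsympBasis (A : Set ℤ) : Prop := ∃ h, CoversAt A h

/-- The order `G(A)` of an asymptotic basis. -/
noncomputable def basisOrder (A : Set ℤ) : ℕ := sInf {h | CoversAt A h}

/-- Lower asymptotic density of a set of integers. -/
noncomputable def lowerDensity (S : Set ℤ) : ℝ :=
  Filter.liminf (fun n : ℕ => ((S ∩ Set.Icc 1 (n : ℤ)).ncard : ℝ) / n) Filter.atTop

/-- Diameter of a set of integers. -/
noncomputable def diam (S : Set ℤ) : ℤ := sSup S - sInf S

/-- `h`-fold sumset in `ZMod n`. -/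
def nfoldZ {n : ℕ} (A : Set (ZMod n)) : ℕ → Set (ZMod n)
  | 0 => {0}
  | t + 1 => A + nfoldZ A t


lemma nfold_add_mem {A : Set ℤ} {x y : ℤ} {s t : ℕ}
    (hx : x ∈ nfold A s) (hy : y ∈ nfold A t) : x + y ∈ nfold A (s + t) := by
  induction s generalizing x with
  | zero =>
    simp only [nfold, Set.mem_singleton_iff] at hx
    subst hx; simpa using hy
  | succ n ih =>
    obtain ⟨a, ha, x', hx', rfl⟩ := hx
    have h2 := Set.add_mem_add ha (ih hx')
    have : n + 1 + t = (n + t) + 1 := by omega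
    rw [this]
    show a + x' + y ∈ A + nfold A (n + t)
    simpa [add_assoc] using h2

lemma zero_mem_nfold {A : Set ℤ} (h0 : (0:ℤ) ∈ A) (t : ℕ) : (0:ℤ) ∈ nfold A t := by
  induction t with
  | zero => simp [nfold]
  | succ n ih => show (0:ℤ) ∈ A + nfold A n; simpa using Set.add_mem_add h0 ih

lemma nfold_mono {A : Set ℤ} (h0 : (0:ℤ) ∈ A) {s t : ℕ} (hst : s ≤ t) {x : ℤ}
    (hx : x ∈ nfold A s) : x ∈ nfold A t := by
  obtain ⟨u, rfl⟩ := Nat.exists_eq_add_of_le hst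
  simpa using nfold_add_mem hx (zero_mem_nfold h0 u)

lemma smul_mem_nfold {A : Set ℤ} {a : ℤ} (ha : a ∈ A) (c : ℕ) :
    (c : ℤ) * a ∈ nfold A c := by
  induction c with
  | zero => simp [nfold]
  | succ n ih =>
    have := Set.add_mem_add ha ih
    show ((n : ℤ) + 1) * a ∈ A + nfold A n
    have : ((n : ℤ) + 1) * a = a + (n : ℤ) * a := by ring
    rw [this]
    exact Set.add_mem_add ha ih

theorem stmt6 (d k : ℕ) (hd : 1 ≤ d) (hk : 2 ≤ k)
    (Y : Set ℤ)
    (hY : Y = {0, 1, (d : ℤ) * (k : ℤ) ^ 2} ∪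
      {x : ℤ | ∃ j : ℕ, 1 ≤ j ∧ j ≤ d ∧ x = (j : ℤ) * k})
    (m : ℤ) (hm0 : 0 ≤ m) (hm1 : m ≤ (d : ℤ) * (k : ℤ) ^ 3 - 1) :
    m ∈ nfold Y (3 * k - 2) := by
  lift m to ℕ using hm0 with M
  have h0Y : (0:ℤ) ∈ Y := by rw [hY]; left; left; rfl
  have h1Y : (1:ℤ) ∈ Y := by rw [hY]; left; right; left; rfl
  have hdk2Y : (d:ℤ) * (k:ℤ)^2 ∈ Y := by rw [hY]; left; right; right; rfl
  have hdkY : (d:ℤ) * (k:ℤ) ∈ Y := by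
    rw [hY]; right; exact ⟨d, hd, le_refl d, rfl⟩
  have hkpos : 0 < k := by omega
  have hNpos : 0 < d * k^2 := by positivity
  have hM : M < d * k^3 := by
    have : (M:ℤ) < (d:ℤ) * (k:ℤ)^3 := by linarith
    exact_mod_cast this
  set q := M / (d * k^2) with hq_def
  set r := M % (d * k^2) with hr_def
  set a := r / k with ha_def
  set b := r % k with hb_def
  set c := a / d with hc_def
  set e := a % d with he_def
  have hMeq : d * k^2 * q + r = M := Nat.div_add_mod M (d * k^2)
  have hreq : k * a + b = r := Nat.div_add_mod r k
  have haeq : d * c + e = a := Nat.div_add_mod a d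
  have hq : q < k := by
    rw [hq_def, Nat.div_lt_iff_lt_mul hNpos]
    calc M < d * k^3 := hM
    _ = k * (d * k^2) := by ring
  have hr : r < d * k^2 := Nat.mod_lt _ hNpos
  have hb : b < k := Nat.mod_lt _ hkpos
  have ha : a < d * k := by
    rw [ha_def, Nat.div_lt_iff_lt_mul hkpos]
    calc r < d * k^2 := hr
    _ = d * k * k := by ring
  have hc : c < k := by
    rw [hc_def, Nat.div_lt_iff_lt_mul (by omega : 0 < d)]
    calc a < d * k := ha
    _ = k * d := by ring
  have he : e < d := Nat.mod_lt _ (by omega)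
  have hE : (e:ℤ) * k ∈ nfold Y (if e = 0 then 0 else 1) := by
    by_cases h : e = 0
    · simp [h, nfold]
    · have hek : (e:ℤ) * k ∈ Y := by
        rw [hY]; right; exact ⟨e, by omega, by omega, rfl⟩
      simp only [h, if_false]
      show (e:ℤ) * k ∈ Y + nfold Y 0
      simpa [nfold] using Set.add_mem_add hek (Set.mem_singleton (0:ℤ))
  have key := nfold_add_mem (smul_mem_nfold hdk2Y q)
    (nfold_add_mem (smul_mem_nfold hdkY c)
      (nfold_add_mem hE (smul_mem_nfold h1Y b)))
  have hsum : (M:ℤ) = (q:ℤ) * ((d:ℤ) * (k:ℤ)^2) + ((c:ℤ) * ((d:ℤ) * (k:ℤ)) +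
      ((e:ℤ) * k + (b:ℤ) * 1)) := by
    have : M = d * k^2 * q + (k * (d * c + e) + b) := by rw [haeq, hreq, hMeq]
    rw [this]; push_cast; ring
  rw [← hsum] at key
  refine nfold_mono h0Y ?_ key
  by_cases h : e = 0 <;> simp [h] <;> omega
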